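/- Let F be a field, σ, τ ∈ {+1, -1}, and k a positive integer. With M^σ_k the 2k×2k block-diagonal matrix with k blocks [[0,1],[σ,0]], the pair of 2k×2k matrices (0₁ ⊕ M^σ_{k-1} ⊕ 0₁, M^τ_k) is equivalent to (J_k(0), I_k) ⊕ (J_k(0), I_k), and the pair (I₁ ⊕ M^σ_{k-1} ⊕ 0₁, M^τ_k) is equivalent to (J_{2k}(0), I_{2k}). -/

import Mathlib

open Matrix

/-- Equivalence of pairs of square matrices. -/
def PairEquiv {F : Type*} [Field F] {n : ℕ} (A B A' B' : Matrix (Fin n) (Fin n) F) : Prop :=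
  ∃ R S : Matrix (Fin n) (Fin n) F, IsUnit R ∧ IsUnit S ∧ R * A * S = A' ∧ R * B * S = B'

/-- The `n×n` nilpotent Jordan block `J_n(0)`. -/
def Jnil (F : Type*) [Field F] (n : ℕ) : Matrix (Fin n) (Fin n) F :=
  Matrix.of fun i j => if (j : ℕ) = (i : ℕ) + 1 then (1 : F) else 0

section Aux
variable {F : Type*} [Field F]

lemma pow_even_one' {x : F} (hx : x * x = 1) {n : ℕ} (hn : n % 2 = 0) : x ^ n = 1 := by
  rw [show n = 2 * (n / 2) by omega, pow_mul, pow_two, hx, one_pow]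

lemma pp2 {x : F} (hx : x * x = 1) {a b : ℕ} (h : (a + b) % 2 = 0) : x ^ a * x ^ b = 1 := by
  rw [← pow_add]; exact pow_even_one' hx h

lemma pp3 {x : F} (hx : x * x = 1) {a b : ℕ} (h : (a + b) % 2 = 1) : x ^ a * x * x ^ b = 1 := by
  rw [show x ^ a * x = x ^ (a + 1) by rw [pow_succ], ← pow_add]
  exact pow_even_one' hx (by omega)

lemma ppmix {x y : F} (hx : x * x = 1) (hy : y * y = 1) {a b : ℕ}
    (ha : a % 2 = 0) (hb : b % 2 = 0) : x ^ a * y ^ b = 1 := by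
  rw [pow_even_one' hx ha, pow_even_one' hy hb, one_mul]

lemma rowPick_mul {n : ℕ} (a : Fin n → F) (r : Fin n → Fin n)
    (M : Matrix (Fin n) (Fin n) F) (i j : Fin n) :
    ((Matrix.of fun i l => if l = r i then a i else 0) * M) i j = a i * M (r i) j := by
  rw [Matrix.mul_apply, Finset.sum_eq_single (r i)]
  · simp
  · intro l _ hl; simp [hl]
  · simp

lemma mul_colPick {n : ℕ} (b : Fin n → F) (c : Fin n → Fin n)
    (M : Matrix (Fin n) (Fin n) F) (i j : Fin n) :
    (M * (Matrix.of fun l j => if l = c j then b j else 0)) i j = M i (c j) * b j := by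
  rw [Matrix.mul_apply, Finset.sum_eq_single (c j)]
  · simp
  · intro l _ hl; simp [hl]
  · simp

lemma pair_equiv_mk {n : ℕ} (a b : Fin n → F) (r c : Fin n → Fin n)
    (hr : Function.Injective r) (hc : Function.Injective c)
    (ha : ∀ i, a i * a i = 1) (hb : ∀ j, b j * b j = 1)
    (A B A' B' : Matrix (Fin n) (Fin n) F)
    (hA : ∀ i j, a i * A (r i) (c j) * b j = A' i j)
    (hB : ∀ i j, a i * B (r i) (c j) * b j = B' i j) :
    PairEquiv A B A' B' := by
  refine ⟨Matrix.of fun i l => if l = r i then a i else 0,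
          Matrix.of fun l j => if l = c j then b j else 0, ?_, ?_, ?_, ?_⟩
  · have h : (Matrix.of fun i l => if l = r i then a i else 0) *
        (Matrix.of fun l j => if l = r j then a j else 0) = 1 := by
      ext i j
      rw [rowPick_mul]
      simp only [Matrix.of_apply, hr.eq_iff, Matrix.one_apply, mul_ite, mul_zero]
      split_ifs with h
      · rw [h]; exact ha j
      · rfl
    exact isUnit_iff_exists.mpr ⟨_, h, mul_eq_one_comm.mp h⟩
  · have h : (Matrix.of fun i l => if l = c i then b i else 0) *
        (Matrix.of fun l j => if l = c j then b j else 0) = 1 := by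
      ext i j
      rw [rowPick_mul]
      simp only [Matrix.of_apply, hc.eq_iff, Matrix.one_apply, mul_ite, mul_zero]
      split_ifs with h
      · rw [h]; exact hb j
      · rfl
    exact isUnit_iff_exists.mpr ⟨_, mul_eq_one_comm.mp h, h⟩
  · ext i j
    rw [mul_colPick, rowPick_mul]
    exact hA i j
  · ext i j
    rw [mul_colPick, rowPick_mul]
    exact hB i j

end Aux

/-- Row picker for part 1. -/
def rr1 (k : ℕ) (i : Fin (2 * k)) : Fin (2 * k) :=
  if h : (i : ℕ) < k then ⟨2 * (i : ℕ) + 1, by omega⟩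
  else ⟨2 * (2 * k - 1 - (i : ℕ)), by have := i.isLt; omega⟩

lemma rr1_val (k : ℕ) (i : Fin (2 * k)) :
    (rr1 k i : ℕ) = if (i : ℕ) < k then 2 * (i : ℕ) + 1 else 2 * (2 * k - 1 - (i : ℕ)) := by
  unfold rr1; split <;> simp [*]

/-- Column picker for part 1. -/
def cc1 (k : ℕ) (j : Fin (2 * k)) : Fin (2 * k) :=
  if h : (j : ℕ) < k then ⟨2 * (j : ℕ), by omega⟩
  else ⟨4 * k - 1 - 2 * (j : ℕ), by have := j.isLt; omega⟩

lemma cc1_val (k : ℕ) (j : Fin (2 * k)) :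
    (cc1 k j : ℕ) = if (j : ℕ) < k then 2 * (j : ℕ) else 4 * k - 1 - 2 * (j : ℕ) := by
  unfold cc1; split <;> simp [*]

def rr2 (k : ℕ) (i : Fin (2 * k)) : Fin (2 * k) :=
  if h : (i : ℕ) < k then ⟨2 * (k - 1 - (i : ℕ)), by omega⟩
  else ⟨2 * ((i : ℕ) - k) + 1, by have := i.isLt; omega⟩

lemma rr2_val (k : ℕ) (i : Fin (2 * k)) :
    (rr2 k i : ℕ) = if (i : ℕ) < k then 2 * (k - 1 - (i : ℕ)) else 2 * ((i : ℕ) - k) + 1 := by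
  unfold rr2; split <;> simp [*]

def cc2 (k : ℕ) (j : Fin (2 * k)) : Fin (2 * k) :=
  if h : (j : ℕ) < k then ⟨2 * k - 1 - 2 * (j : ℕ), by omega⟩
  else ⟨2 * ((j : ℕ) - k), by have := j.isLt; omega⟩

lemma cc2_val (k : ℕ) (j : Fin (2 * k)) :
    (cc2 k j : ℕ) = if (j : ℕ) < k then 2 * k - 1 - 2 * (j : ℕ) else 2 * ((j : ℕ) - k) := by
  unfold cc2; split <;> simp [*]

/-- `(0₁ ⊕ M^σ_{k-1} ⊕ 0₁, M^τ_k) ≈ (J_k(0), I_k) ⊕ (J_k(0), I_k)` and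
`(I₁ ⊕ M^σ_{k-1} ⊕ 0₁, M^τ_k) ≈ (J_{2k}(0), I_{2k})`, where `M^σ_j` is
block-diagonal with `j` blocks `[[0,1],[σ,0]]`, as `2k × 2k` matrices. -/
theorem stmt_9 (F : Type*) [Field F] (k : ℕ) (hk : 0 < k)
    (s t : F) (hs : s = 1 ∨ s = -1) (ht : t = 1 ∨ t = -1) :
    PairEquiv
      -- 0₁ ⊕ M^σ_{k-1} ⊕ 0₁
      (Matrix.of fun i j : Fin (2 * k) =>
        if (j : ℕ) = (i : ℕ) + 1 ∧ (i : ℕ) % 2 = 1 then (1 : F)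
        else if (i : ℕ) = (j : ℕ) + 1 ∧ (j : ℕ) % 2 = 1 then s else 0)
      -- M^τ_k
      (Matrix.of fun i j : Fin (2 * k) =>
        if (j : ℕ) = (i : ℕ) + 1 ∧ (i : ℕ) % 2 = 0 then (1 : F)
        else if (i : ℕ) = (j : ℕ) + 1 ∧ (j : ℕ) % 2 = 0 then t else 0)
      -- J_k(0) ⊕ J_k(0)
      (Matrix.of fun i j : Fin (2 * k) =>
        if (j : ℕ) = (i : ℕ) + 1 ∧ (j : ℕ) ≠ k then (1 : F) else 0)
      (1 : Matrix (Fin (2 * k)) (Fin (2 * k)) F)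
    ∧
    PairEquiv
      -- I₁ ⊕ M^σ_{k-1} ⊕ 0₁
      (Matrix.of fun i j : Fin (2 * k) =>
        if (i : ℕ) = 0 ∧ (j : ℕ) = 0 then (1 : F)
        else if (j : ℕ) = (i : ℕ) + 1 ∧ (i : ℕ) % 2 = 1 then 1
        else if (i : ℕ) = (j : ℕ) + 1 ∧ (j : ℕ) % 2 = 1 then s else 0)
      -- M^τ_k
      (Matrix.of fun i j : Fin (2 * k) =>
        if (j : ℕ) = (i : ℕ) + 1 ∧ (i : ℕ) % 2 = 0 then (1 : F)
        else if (i : ℕ) = (j : ℕ) + 1 ∧ (j : ℕ) % 2 = 0 then t else 0)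
      (Jnil F (2 * k))
      (1 : Matrix (Fin (2 * k)) (Fin (2 * k)) F) := by
  have hs2 : s * s = 1 := by rcases hs with h | h <;> rw [h] <;> ring
  have ht2 : t * t = 1 := by rcases ht with h | h <;> rw [h] <;> ring
  constructor
  · apply pair_equiv_mk
      (fun i => if (i : ℕ) < k then t ^ (i : ℕ) else s ^ ((i : ℕ) - k))
      (fun j => if (j : ℕ) < k then t ^ ((j : ℕ) + 1) else s ^ ((j : ℕ) - k))
      (rr1 k) (cc1 k)
    · intro i j h
      have h' : (rr1 k i : ℕ) = (rr1 k j : ℕ) := congrArg Fin.val h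
      rw [rr1_val, rr1_val] at h'
      have hi := i.isLt; have hj := j.isLt
      exact Fin.val_injective (by split_ifs at h' <;> omega)
    · intro i j h
      have h' : (cc1 k i : ℕ) = (cc1 k j : ℕ) := congrArg Fin.val h
      rw [cc1_val, cc1_val] at h'
      have hi := i.isLt; have hj := j.isLt
      exact Fin.val_injective (by split_ifs at h' <;> omega)
    · intro i
      split_ifs
      · exact pp2 ht2 (by omega)
      · exact pp2 hs2 (by omega)
    · intro j
      split_ifs
      · exact pp2 ht2 (by omega)
      · exact pp2 hs2 (by omega)
    · intro i j
      have hi := i.isLt; have hj := j.isLt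
      simp only [Matrix.of_apply, rr1_val, cc1_val]
      by_cases hik : (i : ℕ) < k <;> by_cases hjk : (j : ℕ) < k <;>
        simp only [hik, hjk, if_true, if_false] <;>
        split_ifs <;>
        first
          | ring1
          | (exfalso; omega)
          | (exfalso; simp only [false_and] at *; done)
          | (rw [mul_one]
             first
               | (apply pp2 ht2; omega)
               | (apply pp2 hs2; omega)
               | (apply ppmix hs2 ht2 <;> omega))
          | (apply pp3 ht2; omega)
          | (apply pp3 hs2; omega)
          | (simp_all; done)
    · intro i j
      have hi := i.isLt; have hj := j.isLt
      simp only [Matrix.of_apply, rr1_val, cc1_val, Matrix.one_apply, Fin.ext_iff]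
      by_cases hik : (i : ℕ) < k <;> by_cases hjk : (j : ℕ) < k <;>
        simp only [hik, hjk, if_true, if_false] <;>
        split_ifs <;>
        first
          | ring1
          | (exfalso; omega)
          | (exfalso; simp_all; done)
          | (rw [mul_one]
             first
               | (apply pp2 ht2; omega)
               | (apply pp2 hs2; omega)
               | (apply ppmix hs2 ht2 <;> omega))
          | (apply pp3 ht2; omega)
          | (apply pp3 hs2; omega)
          | (simp_all; done)
  · apply pair_equiv_mk
      (fun i => if (i : ℕ) < k then s ^ ((i : ℕ) + k - 1) else t ^ ((i : ℕ) - k + 1))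
      (fun j => if (j : ℕ) < k then s ^ ((j : ℕ) + k - 1) else t ^ ((j : ℕ) - k + 2))
      (rr2 k) (cc2 k)
    · intro i j h
      have h' : (rr2 k i : ℕ) = (rr2 k j : ℕ) := congrArg Fin.val h
      rw [rr2_val, rr2_val] at h'
      have hi := i.isLt; have hj := j.isLt
      exact Fin.val_injective (by split_ifs at h' <;> omega)
    · intro i j h
      have h' : (cc2 k i : ℕ) = (cc2 k j : ℕ) := congrArg Fin.val h
      rw [cc2_val, cc2_val] at h'
      have hi := i.isLt; have hj := j.isLt
      exact Fin.val_injective (by split_ifs at h' <;> omega)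
    · intro i
      split_ifs
      · exact pp2 hs2 (by omega)
      · exact pp2 ht2 (by omega)
    · intro j
      split_ifs
      · exact pp2 hs2 (by omega)
      · exact pp2 ht2 (by omega)
    · intro i j
      have hi := i.isLt; have hj := j.isLt
      simp only [Matrix.of_apply, rr2_val, cc2_val, Jnil]
      by_cases hik : (i : ℕ) < k <;> by_cases hjk : (j : ℕ) < k <;>
        simp only [hik, hjk, if_true, if_false] <;>
        split_ifs <;>
        first
          | ring1
          | (exfalso; omega)
          | (exfalso; simp only [false_and] at *; done)
          | (rw [mul_one]
             first
               | (apply pp2 ht2; omega)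
               | (apply pp2 hs2; omega)
               | (apply ppmix hs2 ht2 <;> omega))
          | (apply pp3 ht2; omega)
          | (apply pp3 hs2; omega)
          | (simp_all; done)
    · intro i j
      have hi := i.isLt; have hj := j.isLt
      simp only [Matrix.of_apply, rr2_val, cc2_val, Matrix.one_apply, Fin.ext_iff]
      by_cases hik : (i : ℕ) < k <;> by_cases hjk : (j : ℕ) < k <;>
        simp only [hik, hjk, if_true, if_false] <;>
        split_ifs <;>
        first
          | ring1
          | (exfalso; omega)
          | (exfalso; simp_all; done)
          | (rw [mul_one]
             first
               | (apply pp2 ht2; omega)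
               | (apply pp2 hs2; omega)
               | (apply ppmix hs2 ht2 <;> omega))
          | (apply pp3 ht2; omega)
          | (apply pp3 hs2; omega)
          | (simp_all; done)
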